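/- Define the slopes s(i) := d(i)/r(i) ∈ ℚ for 0 ≤ i ≤ p−1 and set s(p) := 1. Then n(0)/k(0) > s(0) ≥ s(1) ≥ ⋯ ≥ s(p−1) ≥ s(p) = 1, and for each 1 ≤ i ≤ p the equality s(i−1) = s(i) holds if and only if n_{p−i+1} = 2. -/

import Mathlib

def tridiagDet (m : ℕ) (a : ℕ → ℤ) : ℤ :=
  Matrix.det (Matrix.of fun i j : Fin m =>
    if (i : ℕ) = (j : ℕ) then a ((i : ℕ) + 1)
    else if (i : ℕ) + 1 = (j : ℕ) ∨ (j : ℕ) + 1 = (i : ℕ) then -1 else 0)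

lemma tridiag_zero (a : ℕ → ℤ) : tridiagDet 0 a = 1 := by simp [tridiagDet]

lemma tridiag_one (a : ℕ → ℤ) : tridiagDet 1 a = a 1 := by
  simp [tridiagDet, Matrix.det_fin_one]

lemma tridiag_head (m : ℕ) (a : ℕ → ℤ) :
    tridiagDet (m + 2) a =
      a 1 * tridiagDet (m + 1) (fun k => a (k + 1)) - tridiagDet m (fun k => a (k + 2)) := by
  set A : Matrix (Fin (m+2)) (Fin (m+2)) ℤ := Matrix.of fun i j : Fin (m+2) =>
    if (i : ℕ) = (j : ℕ) then a ((i : ℕ) + 1)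
    else if (i : ℕ) + 1 = (j : ℕ) ∨ (j : ℕ) + 1 = (i : ℕ) then -1 else 0 with hA
  have expand := Matrix.det_succ_row_zero A
  rw [Finset.sum_eq_add_of_mem (0 : Fin (m+2)) 1 (Finset.mem_univ _) (Finset.mem_univ _)
      (by simp [Fin.ext_iff])
      (fun c _ hc => by
        have h0 : (c : ℕ) ≠ 0 := fun h => hc.1 (Fin.ext h)
        have h1 : (c : ℕ) ≠ 1 := fun h => hc.2 (Fin.ext (by simp [h]))
        have : A 0 c = 0 := by
          simp only [hA, Matrix.of_apply, Fin.val_zero]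
          split_ifs <;> simp_all
        rw [this, mul_zero, zero_mul])] at expand
  -- first minor
  have hsub1 : A.submatrix Fin.succ (Fin.succAbove 0) = Matrix.of (fun i j : Fin (m+1) =>
      if (i : ℕ) = (j : ℕ) then (fun k => a (k+1)) ((i : ℕ) + 1)
      else if (i : ℕ) + 1 = (j : ℕ) ∨ (j : ℕ) + 1 = (i : ℕ) then -1 else 0) := by
    ext i j
    simp only [Matrix.submatrix_apply, Fin.succAbove_zero, hA, Matrix.of_apply, Fin.val_succ]
    rcases eq_or_ne (i : ℕ) (j : ℕ) with h | h
    · rw [if_pos (by omega), if_pos h]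
    · rw [if_neg (by omega), if_neg h]
      by_cases h2 : (i : ℕ) + 1 = (j : ℕ) ∨ (j : ℕ) + 1 = (i : ℕ)
      · rw [if_pos (by omega), if_pos h2]
      · rw [if_neg (by omega), if_neg h2]
  -- second minor
  have hsub2 : (A.submatrix Fin.succ (Fin.succAbove 1)).det
      = - tridiagDet m (fun k => a (k + 2)) := by
    rw [Matrix.det_succ_column_zero]
    rw [Finset.sum_eq_single (0 : Fin (m+1))
      (fun b _ hb => by
        have hb' : (b : ℕ) ≠ 0 := fun h => hb (Fin.ext h)
        have hcol : ((Fin.succAbove 1 (0 : Fin (m+1))) : ℕ) = 0 := by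
          simp [Fin.succAbove]
        have : A b.succ (Fin.succAbove 1 0) = 0 := by
          simp only [hA, Matrix.of_apply, hcol, Fin.val_succ]
          rw [if_neg (by omega), if_neg (by omega)]
        simp only [Matrix.submatrix_apply, this, mul_zero, zero_mul])
      (by simp)]
    have hcolF : (Fin.succAbove (1 : Fin (m+2)) (0 : Fin (m+1))) = 0 := by
      ext; simp [Fin.succAbove]
    have hent : A (Fin.succ (0 : Fin (m+1))) (0 : Fin (m+2)) = -1 := by
      simp only [hA, Matrix.of_apply, Fin.val_succ, Fin.val_zero]
      norm_num
    have hsub3 : (A.submatrix Fin.succ (Fin.succAbove 1)).submatrix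
        (Fin.succAbove 0) Fin.succ = Matrix.of (fun i j : Fin m =>
        if (i : ℕ) = (j : ℕ) then (fun k => a (k+2)) ((i : ℕ) + 1)
        else if (i : ℕ) + 1 = (j : ℕ) ∨ (j : ℕ) + 1 = (i : ℕ) then -1 else 0) := by
      ext i j
      have hcol2 : ((Fin.succAbove (1 : Fin (m+2)) (Fin.succ j)) : ℕ) = (j : ℕ) + 2 := by
        simp [Fin.succAbove, Fin.lt_def]
      simp only [Matrix.submatrix_apply, Fin.succAbove_zero, hA, Matrix.of_apply, Fin.val_succ,
        hcol2]
      rcases eq_or_ne (i : ℕ) (j : ℕ) with h | h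
      · rw [if_pos (by omega), if_pos h]
      · rw [if_neg (by omega), if_neg h]
        by_cases h2 : (i : ℕ) + 1 = (j : ℕ) ∨ (j : ℕ) + 1 = (i : ℕ)
        · rw [if_pos (by omega), if_pos h2]
        · rw [if_neg (by omega), if_neg h2]
    simp only [Matrix.submatrix_apply, hcolF]
    rw [hent, hsub3]
    simp [tridiagDet]
  have h00 : A 0 0 = a 1 := by simp [hA]
  have h01 : A 0 1 = -1 := by
    simp only [hA, Matrix.of_apply, Fin.val_zero, Fin.val_one]
    norm_num
  rw [h00, h01, hsub1, hsub2] at expand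
  simpa [tridiagDet, sub_eq_add_neg] using expand

lemma tridiag_tail (m : ℕ) (a : ℕ → ℤ) :
    tridiagDet (m + 2) a = a (m + 2) * tridiagDet (m + 1) a - tridiagDet m a := by
  induction m using Nat.strong_induction_on generalizing a with
  | _ m ih =>
    match m with
    | 0 =>
      rw [tridiag_head, tridiag_zero, tridiag_one, tridiag_one, tridiag_zero]
      ring
    | 1 =>
      rw [tridiag_head 1 a, show (1:ℕ)+1 = 0+2 from rfl, tridiag_head 0, tridiag_head 0,
        tridiag_one, tridiag_one, tridiag_one, tridiag_zero, tridiag_zero]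
      norm_num
      ring
    | (m+2) =>
      have e1 : m + 2 + 2 = m + 2 + 2 := rfl
      rw [tridiag_head (m+2) a,
          ih (m+1) (by omega) (fun k => a (k+1)),
          ih m (by omega) (fun k => a (k+2)),
          show m + 2 + 1 = m + 1 + 2 from rfl, tridiag_head (m+1) a,
          show m + 1 + 1 = m + 2 from rfl, tridiag_head m a]
      have e2 : a (m + 1 + 2 + 1) = a (m + 2 + 2) := by norm_num
      rw [e2]
      ring

def Nseq (n : ℕ → ℤ) (m : ℕ) : ℤ := tridiagDet m n
def Kseq (n : ℕ → ℤ) : ℕ → ℤ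
  | 0 => 0
  | m + 1 => tridiagDet m (fun j => n (j + 1))

lemma Nseq_zero (n : ℕ → ℤ) : Nseq n 0 = 1 := tridiag_zero n
lemma Nseq_one (n : ℕ → ℤ) : Nseq n 1 = n 1 := tridiag_one n
lemma Kseq_zero (n : ℕ → ℤ) : Kseq n 0 = 0 := rfl
lemma Kseq_one (n : ℕ → ℤ) : Kseq n 1 = 1 := tridiag_zero (fun j => n (j + 1))

lemma Nseq_rec (n : ℕ → ℤ) (m : ℕ) :
    Nseq n (m + 2) = n (m + 2) * Nseq n (m + 1) - Nseq n m := tridiag_tail m n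

lemma Kseq_rec (n : ℕ → ℤ) (m : ℕ) :
    Kseq n (m + 2) = n (m + 2) * Kseq n (m + 1) - Kseq n m := by
  match m with
  | 0 => simp [Kseq, tridiag_one, tridiag_zero]
  | m + 1 => exact tridiag_tail m (fun j => n (j + 1))

lemma Einv (n : ℕ → ℤ) (m : ℕ) :
    Nseq n m * Kseq n (m + 1) - Nseq n (m + 1) * Kseq n m = 1 := by
  induction m with
  | zero => simp [Nseq_zero, Kseq_zero, Kseq_one]
  | succ m ih =>
    rw [Nseq_rec, Kseq_rec]
    linear_combination ih

lemma cross (n : ℕ → ℤ) (m : ℕ) :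
    (Nseq n (m + 2) - Nseq n (m + 1)) * (Kseq n (m + 1) - Kseq n m)
      - (Nseq n (m + 1) - Nseq n m) * (Kseq n (m + 2) - Kseq n (m + 1))
      = n (m + 2) - 2 := by
  rw [Nseq_rec, Kseq_rec]
  linear_combination (n (m + 2) - 2) * Einv n m

lemma seq_pos (n : ℕ → ℤ) (p : ℕ) (hn : ∀ i, 1 ≤ i → i ≤ p → 2 ≤ n i) :
    ∀ m, m + 1 ≤ p →
      1 ≤ Nseq n m ∧ 0 ≤ Kseq n m ∧
      1 ≤ Nseq n (m + 1) - Nseq n m ∧ 1 ≤ Kseq n (m + 1) - Kseq n m := by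
  intro m
  induction m with
  | zero =>
    intro hp
    have := hn 1 le_rfl hp
    simp [Nseq_zero, Nseq_one, Kseq_zero, Kseq_one]
    omega
  | succ m ih =>
    intro hp
    obtain ⟨h1, h2, h3, h4⟩ := ih (by omega)
    have hn2 := hn (m + 2) (by omega) hp
    have hN : Nseq n (m + 2) = n (m + 2) * Nseq n (m + 1) - Nseq n m := Nseq_rec n m
    have hK : Kseq n (m + 2) = n (m + 2) * Kseq n (m + 1) - Kseq n m := Kseq_rec n m
    refine ⟨by nlinarith, by nlinarith, by nlinarith, by nlinarith⟩

/-- `nn n p i = D(n 1, …, n (p - i))`: the numerator of the `(p-i)`-th convergent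
(equal to `1` for `i = p`, matching the convention `n(p) = 1`). -/
def nn (n : ℕ → ℤ) (p i : ℕ) : ℤ := tridiagDet (p - i) n

/-- `kk n p i = D(n 2, …, n (p - i))` for `i < p`, and `kk n p p = 0`
(the convention `k(p) = 0`). -/
def kk (n : ℕ → ℤ) (p i : ℕ) : ℤ :=
  if i = p then 0 else tridiagDet (p - i - 1) (fun j => n (j + 1))

/-- `dd n p i = n(i) - n(i+1)`, the degree of the stable kernel bundle `S_i`. -/
def dd (n : ℕ → ℤ) (p i : ℕ) : ℤ := nn n p i - nn n p (i + 1)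

/-- `rr n p i = k(i) - k(i+1)`, the rank of the stable kernel bundle `S_i`. -/
def rr (n : ℕ → ℤ) (p i : ℕ) : ℤ := kk n p i - kk n p (i + 1)

/-- The slopes `s(i) = d(i)/r(i)` for `0 ≤ i ≤ p-1` (with `s(p) := 1`) satisfy
`n(0)/k(0) > s(0) ≥ s(1) ≥ ... ≥ s(p) = 1`, and for `1 ≤ i ≤ p` the equality
`s(i-1) = s(i)` holds if and only if `n_(p-i+1) = 2`. -/
theorem slopes_monotone
    (p : ℕ) (hp : 1 ≤ p) (n : ℕ → ℤ) (hn : ∀ i, 1 ≤ i → i ≤ p → 2 ≤ n i)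
    (s : ℕ → ℚ) (hs : ∀ i ≤ p - 1, s i = (dd n p i : ℚ) / (rr n p i : ℚ))
    (hsp : s p = 1) :
    s 0 < (nn n p 0 : ℚ) / (kk n p 0 : ℚ) ∧
    (∀ i, 1 ≤ i → i ≤ p → s i ≤ s (i - 1)) ∧
    (∀ i, 1 ≤ i → i ≤ p → (s (i - 1) = s i ↔ n (p - i + 1) = 2)) := by
  have hnn : ∀ j, nn n p j = Nseq n (p - j) := fun _ => rfl
  have hkk : ∀ j, j ≤ p → kk n p j = Kseq n (p - j) := by
    intro j hj
    by_cases h : j = p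
    · subst h
      simp [kk, Kseq]
    · have h1 : p - j - 1 + 1 = p - j := by omega
      rw [kk, if_neg h, ← h1]
      rfl
  have pos := seq_pos n p hn
  have hsm : ∀ m, m + 1 ≤ p → s (p - m - 1) =
      ((Nseq n (m + 1) - Nseq n m : ℤ) : ℚ) / ((Kseq n (m + 1) - Kseq n m : ℤ) : ℚ) := by
    intro m hm
    have hi : p - m - 1 ≤ p - 1 := by omega
    have e1 : p - (p - m - 1) = m + 1 := by omega
    have e2 : p - (p - m - 1 + 1) = m := by omega
    have hd : dd n p (p - m - 1) = Nseq n (m + 1) - Nseq n m := by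
      rw [dd, hnn, hnn, e1, e2]
    have hr : rr n p (p - m - 1) = Kseq n (m + 1) - Kseq n m := by
      rw [rr, hkk _ (by omega), hkk _ (by omega), e1, e2]
    rw [hs _ hi, hd, hr]
  -- value of s (p-1)
  have hsp1 : s (p - 1) = ((n 1 - 1 : ℤ) : ℚ) := by
    have h := hsm 0 (by omega)
    rw [show p - 0 - 1 = p - 1 from by omega] at h
    rw [h, Nseq_one, Nseq_zero, Kseq_one, Kseq_zero]
    norm_num
  refine ⟨?_, ?_, ?_⟩
  · -- s 0 < n(0)/k(0)
    have hp1 : p - 1 + 1 = p := by omega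
    have h0 := hsm (p - 1) (by omega)
    rw [show p - (p - 1) - 1 = 0 from by omega, hp1] at h0
    obtain ⟨h1, h2, h3, h4⟩ := pos (p - 1) (by omega)
    rw [hp1] at h3 h4
    have hE := Einv n (p - 1)
    rw [hp1] at hE
    have hKp : 1 ≤ Kseq n p := by omega
    rw [h0, hnn, hkk 0 (by omega), Nat.sub_zero]
    rw [div_lt_div_iff₀ (by exact_mod_cast by omega : (0:ℚ) < ((Kseq n p - Kseq n (p-1) : ℤ) : ℚ))
        (by exact_mod_cast hKp : (0:ℚ) < ((Kseq n p : ℤ) : ℚ))]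
    have : (Nseq n p - Nseq n (p - 1)) * Kseq n p < Nseq n p * (Kseq n p - Kseq n (p - 1)) := by
      nlinarith
    exact_mod_cast this
  · -- monotone
    intro i hi1 hip
    by_cases h : i = p
    · subst h
      rw [hsp, hsp1]
      have := hn 1 le_rfl hp
      exact_mod_cast by omega
    · -- i < p
      have hip' : i < p := lt_of_le_of_ne hip h
      set m := p - i - 1 with hm
      have hmi : p - m - 1 = i := by omega
      have hmi1 : p - (m + 1) - 1 = i - 1 := by omega
      have hA := hsm m (by omega)
      have hB := hsm (m + 1) (by omega)
      rw [hmi] at hA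
      rw [hmi1] at hB
      obtain ⟨_, _, _, h4⟩ := pos m (by omega)
      obtain ⟨_, _, h3', h4'⟩ := pos (m + 1) (by omega)
      have h3'' : 1 ≤ Nseq n (m + 2) - Nseq n (m + 1) := h3'
      have h4'' : 1 ≤ Kseq n (m + 2) - Kseq n (m + 1) := h4'
      rw [hA, hB]
      have hc := cross n m
      have hc2 := hn (m + 2) (by omega) (by omega)
      rw [div_le_div_iff₀ (by exact_mod_cast by omega : (0:ℚ) < ((Kseq n (m+1) - Kseq n m : ℤ) : ℚ))
          (by exact_mod_cast by omega : (0:ℚ) < ((Kseq n (m+2) - Kseq n (m+1) : ℤ) : ℚ))]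
      have : (Nseq n (m + 1) - Nseq n m) * (Kseq n (m + 2) - Kseq n (m + 1))
          ≤ (Nseq n (m + 2) - Nseq n (m + 1)) * (Kseq n (m + 1) - Kseq n m) := by
        nlinarith
      exact_mod_cast this
  · -- equality iff
    intro i hi1 hip
    by_cases h : i = p
    · rw [h, hsp, hsp1, show p - p + 1 = 1 from by omega]
      constructor
      · intro hh
        have : (n 1 - 1 : ℤ) = 1 := by exact_mod_cast hh
        omega
      · intro hh
        rw [hh]
        norm_num
    · have hip' : i < p := lt_of_le_of_ne hip h
      set m := p - i - 1 with hm
      have hmi : p - m - 1 = i := by omega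
      have hmi1 : p - (m + 1) - 1 = i - 1 := by omega
      have hA := hsm m (by omega)
      have hB := hsm (m + 1) (by omega)
      rw [hmi] at hA
      rw [hmi1] at hB
      obtain ⟨_, _, _, h4⟩ := pos m (by omega)
      obtain ⟨_, _, h3', h4'⟩ := pos (m + 1) (by omega)
      have h3'' : 1 ≤ Nseq n (m + 2) - Nseq n (m + 1) := h3'
      have h4'' : 1 ≤ Kseq n (m + 2) - Kseq n (m + 1) := h4'
      have hc := cross n m
      have hpm : p - i + 1 = m + 2 := by omega
      rw [hA, hB, hpm]
      rw [div_eq_div_iff (by exact_mod_cast by omega : ((Kseq n (m+2) - Kseq n (m+1) : ℤ) : ℚ) ≠ 0)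
          (by exact_mod_cast by omega : ((Kseq n (m+1) - Kseq n m : ℤ) : ℚ) ≠ 0)]
      constructor
      · intro hh
        have hh' : (Nseq n (m + 2) - Nseq n (m + 1)) * (Kseq n (m + 1) - Kseq n m)
            = (Nseq n (m + 1) - Nseq n m) * (Kseq n (m + 2) - Kseq n (m + 1)) := by
          exact_mod_cast hh
        omega
      · intro hh
        have : (Nseq n (m + 2) - Nseq n (m + 1)) * (Kseq n (m + 1) - Kseq n m)
            = (Nseq n (m + 1) - Nseq n m) * (Kseq n (m + 2) - Kseq n (m + 1)) := by
          rw [hh] at hc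
          omega
        exact_mod_cast this
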